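/- Let K be a field of characteristic not 2, V a K-vector space of dimension 3, and Q a quadratic form on V. Then for every element x of the Clifford algebra of Q, the nested product x * conj (x * involute (x * conj x)), where conj y := reverse (involute y), is a scalar, i.e. it lies in the range of algebraMap K (CliffordAlgebra Q). (This is the paper's first nested three-dimensional determinant formula Det(A) = A⟦A⟦A⟦A⟧₁₂⟧₃⟧₁₂.) -/

import Mathlib

open CliffordAlgebra

namespace DetAux3

variable {K V : Type*} [Field K] [AddCommGroup V] [Module K V]
variable (Q : QuadraticForm K V) (b : Fin 3 → V)

/-- The eight monomials in an orthogonal basis. -/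
noncomputable def gens : Set (CliffordAlgebra Q) :=
  {1, ι Q (b 0), ι Q (b 1), ι Q (b 2),
    ι Q (b 0) * ι Q (b 1), ι Q (b 0) * ι Q (b 2), ι Q (b 1) * ι Q (b 2),
    ι Q (b 0) * (ι Q (b 1) * ι Q (b 2))}

variable {Q b} (hb : ∀ i j, i ≠ j → Q.IsOrtho (b i) (b j))

section rules
include hb

theorem s10 (t) : ι Q (b 1) * (ι Q (b 0) * t) = -(ι Q (b 0) * (ι Q (b 1) * t)) :=
  ι_mul_ι_mul_of_isOrtho t (hb 1 0 (by decide))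
theorem s20 (t) : ι Q (b 2) * (ι Q (b 0) * t) = -(ι Q (b 0) * (ι Q (b 2) * t)) :=
  ι_mul_ι_mul_of_isOrtho t (hb 2 0 (by decide))
theorem s21 (t) : ι Q (b 2) * (ι Q (b 1) * t) = -(ι Q (b 1) * (ι Q (b 2) * t)) :=
  ι_mul_ι_mul_of_isOrtho t (hb 2 1 (by decide))
theorem p10 : ι Q (b 1) * ι Q (b 0) = -(ι Q (b 0) * ι Q (b 1)) :=
  ι_mul_ι_comm_of_isOrtho (hb 1 0 (by decide))
theorem p20 : ι Q (b 2) * ι Q (b 0) = -(ι Q (b 0) * ι Q (b 2)) :=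
  ι_mul_ι_comm_of_isOrtho (hb 2 0 (by decide))
theorem p21 : ι Q (b 2) * ι Q (b 1) = -(ι Q (b 1) * ι Q (b 2)) :=
  ι_mul_ι_comm_of_isOrtho (hb 2 1 (by decide))

end rules

theorem qq (i : Fin 3) (t) :
    ι Q (b i) * (ι Q (b i) * t) = Q (b i) • t := by
  rw [← mul_assoc, ι_sq_scalar, Algebra.smul_def]

theorem pq (i : Fin 3) : ι Q (b i) * ι Q (b i) = Q (b i) • (1 : CliffordAlgebra Q) := by
  rw [ι_sq_scalar, Algebra.algebraMap_eq_smul_one]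

set_option maxHeartbeats 1000000 in
include hb in
theorem gen_mul_mem (i : Fin 3) {m : CliffordAlgebra Q} (hm : m ∈ gens Q b) :
    ι Q (b i) * m ∈ Submodule.span K (gens Q b) := by
  have hg : ∀ m' ∈ gens Q b, m' ∈ Submodule.span K (gens Q b) :=
    fun _ h => Submodule.subset_span h
  have h0 := hg 1 (Set.mem_insert _ _)
  have h1 := hg (ι Q (b 0)) (Set.mem_insert_of_mem _ (Set.mem_insert _ _))
  have h2 := hg (ι Q (b 1))
    (Set.mem_insert_of_mem _ (Set.mem_insert_of_mem _ (Set.mem_insert _ _)))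
  have h3 := hg (ι Q (b 2)) (Set.mem_insert_of_mem _ (Set.mem_insert_of_mem _
    (Set.mem_insert_of_mem _ (Set.mem_insert _ _))))
  have h4 := hg (ι Q (b 0) * ι Q (b 1)) (Set.mem_insert_of_mem _ (Set.mem_insert_of_mem _
    (Set.mem_insert_of_mem _ (Set.mem_insert_of_mem _ (Set.mem_insert _ _)))))
  have h5 := hg (ι Q (b 0) * ι Q (b 2)) (Set.mem_insert_of_mem _ (Set.mem_insert_of_mem _
    (Set.mem_insert_of_mem _ (Set.mem_insert_of_mem _ (Set.mem_insert_of_mem _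
      (Set.mem_insert _ _))))))
  have h6 := hg (ι Q (b 1) * ι Q (b 2)) (Set.mem_insert_of_mem _ (Set.mem_insert_of_mem _
    (Set.mem_insert_of_mem _ (Set.mem_insert_of_mem _ (Set.mem_insert_of_mem _
      (Set.mem_insert_of_mem _ (Set.mem_insert _ _)))))))
  have h7 := hg (ι Q (b 0) * (ι Q (b 1) * ι Q (b 2))) (Set.mem_insert_of_mem _
    (Set.mem_insert_of_mem _ (Set.mem_insert_of_mem _ (Set.mem_insert_of_mem _
      (Set.mem_insert_of_mem _ (Set.mem_insert_of_mem _ (Set.mem_insert_of_mem _ rfl)))))))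
  simp only [gens, Set.mem_insert_iff, Set.mem_singleton_iff] at hm
  have F0 : ∀ h, (⟨0, h⟩ : Fin 3) = 0 := fun _ => rfl
  have F1 : ∀ h, (⟨1, h⟩ : Fin 3) = 1 := fun _ => rfl
  have F2 : ∀ h, (⟨2, h⟩ : Fin 3) = 2 := fun _ => rfl
  fin_cases i <;> (try simp only [F0, F1, F2]) <;> rcases hm with rfl | rfl | rfl | rfl | rfl | rfl | rfl | rfl <;>
    (try simp only [s10 hb, s20 hb, s21 hb, p10 hb, p20 hb, p21 hb, qq, pq, mul_assoc,
      mul_smul_comm, smul_mul_assoc, smul_smul, Algebra.algebraMap_eq_smul_one,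
      mul_one, one_mul, mul_neg, neg_mul, neg_neg, smul_neg, neg_smul]) <;>
    solve_by_elim [Submodule.smul_mem, Submodule.neg_mem]

end DetAux3

namespace DetAux3

variable {K V : Type*} [Field K] [AddCommGroup V] [Module K V]
variable {Q : QuadraticForm K V}

theorem mem_span_gens (bb : Module.Basis (Fin 3) K V)
    (hb : ∀ i j, i ≠ j → Q.IsOrtho (bb i) (bb j)) (x : CliffordAlgebra Q) :
    x ∈ Submodule.span K (gens Q ⇑bb) := by
  set S := Submodule.span K (gens Q ⇑bb) with hS
  suffices h : ∀ y : CliffordAlgebra Q, ∀ s ∈ S, y * s ∈ S by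
    simpa using h x 1 (Submodule.subset_span (Set.mem_insert _ _))
  intro y
  induction y using CliffordAlgebra.induction with
  | algebraMap r =>
    intro s hs
    rw [← Algebra.smul_def]
    exact S.smul_mem r hs
  | add a c ha hc =>
    intro s hs
    rw [add_mul]
    exact S.add_mem (ha s hs) (hc s hs)
  | mul a c ha hc =>
    intro s hs
    rw [mul_assoc]
    exact ha _ (hc s hs)
  | ι w =>
    have key : ∀ i : Fin 3, ∀ s ∈ S, ι Q (bb i) * s ∈ S := by
      intro i s hs
      induction hs using Submodule.span_induction with
      | mem m hm => exact gen_mul_mem hb i hm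
      | zero => rw [mul_zero]; exact S.zero_mem
      | add a c _ _ ha hc => rw [mul_add]; exact S.add_mem ha hc
      | smul r a _ ha => rw [mul_smul_comm]; exact S.smul_mem r ha
    intro s hs
    have hw : ι Q w = ∑ i, bb.repr w i • ι Q (bb i) := by
      conv_lhs => rw [← bb.sum_repr w]
      rw [map_sum]
      simp_rw [map_smul]
    rw [hw, Finset.sum_mul]
    refine Submodule.sum_mem _ fun i _ => ?_
    rw [smul_mul_assoc]
    exact S.smul_mem _ (key i s hs)

end DetAux3

namespace DetAux3

variable {K V : Type*} [Field K] [AddCommGroup V] [Module K V]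
variable {Q : QuadraticForm K V} {b : Fin 3 → V}

section omega
variable (hb : ∀ i j, i ≠ j → Q.IsOrtho (b i) (b j))
include hb

theorem reverse_omega :
    reverse (ι Q (b 0) * (ι Q (b 1) * ι Q (b 2))) = -(ι Q (b 0) * (ι Q (b 1) * ι Q (b 2))) := by
  simp [reverse.map_mul, s10 hb, s20 hb, s21 hb, p10 hb, p20 hb, p21 hb, qq, pq, mul_assoc,
    mul_smul_comm, smul_mul_assoc, smul_smul, Algebra.algebraMap_eq_smul_one, smul_neg, neg_smul]

theorem involute_omega :
    involute (ι Q (b 0) * (ι Q (b 1) * ι Q (b 2))) = -(ι Q (b 0) * (ι Q (b 1) * ι Q (b 2))) := by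
  simp [map_mul]

theorem omega_sq :
    ι Q (b 0) * (ι Q (b 1) * ι Q (b 2)) * (ι Q (b 0) * (ι Q (b 1) * ι Q (b 2))) =
      algebraMap K _ (-(Q (b 0) * (Q (b 1) * Q (b 2)))) := by
  simp [s10 hb, s20 hb, s21 hb, p10 hb, p20 hb, p21 hb, qq, pq, mul_assoc,
    mul_smul_comm, smul_mul_assoc, smul_smul, Algebra.algebraMap_eq_smul_one, smul_neg, neg_smul,
    mul_comm, mul_left_comm]

theorem omega_comm_gen (i : Fin 3) :
    ι Q (b 0) * (ι Q (b 1) * ι Q (b 2)) * ι Q (b i) =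
      ι Q (b i) * (ι Q (b 0) * (ι Q (b 1) * ι Q (b 2))) := by
  fin_cases i <;>
  · have F0 : ∀ h, (⟨0, h⟩ : Fin 3) = 0 := fun _ => rfl
    have F1 : ∀ h, (⟨1, h⟩ : Fin 3) = 1 := fun _ => rfl
    have F2 : ∀ h, (⟨2, h⟩ : Fin 3) = 2 := fun _ => rfl
    simp [F0, F1, F2, s10 hb, s20 hb, s21 hb, p10 hb, p20 hb, p21 hb, qq, pq, mul_assoc,
      mul_smul_comm, smul_mul_assoc, smul_smul, Algebra.algebraMap_eq_smul_one, smul_neg, neg_smul]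

end omega

theorem omega_comm (bb : Module.Basis (Fin 3) K V)
    (hb : ∀ i j, i ≠ j → Q.IsOrtho (bb i) (bb j)) (x : CliffordAlgebra Q) :
    ι Q (bb 0) * (ι Q (bb 1) * ι Q (bb 2)) * x = x * (ι Q (bb 0) * (ι Q (bb 1) * ι Q (bb 2))) := by
  set ω := ι Q (bb 0) * (ι Q (bb 1) * ι Q (bb 2)) with hω
  induction x using CliffordAlgebra.induction with
  | algebraMap r => rw [← Algebra.commutes]
  | add a c ha hc => rw [mul_add, add_mul, ha, hc]
  | mul a c ha hc => rw [← mul_assoc, ha, mul_assoc, hc, ← mul_assoc]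
  | ι w =>
    have hw : ι Q w = ∑ i, bb.repr w i • ι Q (bb i) := by
      conv_lhs => rw [← bb.sum_repr w]
      rw [map_sum]
      simp_rw [map_smul]
    rw [hw, Finset.mul_sum, Finset.sum_mul]
    refine Finset.sum_congr rfl fun i _ => ?_
    rw [mul_smul_comm, smul_mul_assoc, omega_comm_gen hb]

theorem conj_add_mem (bb : Module.Basis (Fin 3) K V)
    (hb : ∀ i j, i ≠ j → Q.IsOrtho (bb i) (bb j)) (x : CliffordAlgebra Q) :
    x + reverse (involute x) ∈
      Submodule.span K {(1 : CliffordAlgebra Q), ι Q (bb 0) * (ι Q (bb 1) * ι Q (bb 2))} := by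
  set Z := Submodule.span K {(1 : CliffordAlgebra Q), ι Q (bb 0) * (ι Q (bb 1) * ι Q (bb 2))}
    with hZ
  have h1 : (1 : CliffordAlgebra Q) ∈ Z := Submodule.subset_span (Set.mem_insert _ _)
  have hω : ι Q (bb 0) * (ι Q (bb 1) * ι Q (bb 2)) ∈ Z :=
    Submodule.subset_span (Set.mem_insert_of_mem _ rfl)
  have hx := mem_span_gens bb hb x
  induction hx using Submodule.span_induction with
  | mem m hm =>
    simp only [gens, Set.mem_insert_iff, Set.mem_singleton_iff] at hm
    rcases hm with rfl | rfl | rfl | rfl | rfl | rfl | rfl | rfl <;>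
      simp only [map_one, map_mul, involute_ι, reverse_ι, reverse.map_mul, mul_neg, neg_mul,
        neg_neg, reverse.map_one, map_neg] <;>
      (try simp only [s10 hb, s20 hb, s21 hb, p10 hb, p20 hb, p21 hb, qq, pq, mul_assoc,
        mul_smul_comm, smul_mul_assoc, smul_smul, Algebra.algebraMap_eq_smul_one,
        mul_one, one_mul, mul_neg, neg_mul, neg_neg, smul_neg, neg_smul, add_neg_cancel,
        neg_add_cancel]) <;>
      first
        | exact Z.zero_mem
        | exact Z.add_mem h1 h1
        | exact Z.add_mem hω hω
  | zero => simpa using Z.zero_mem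
  | add a c _ _ ha hc =>
    have : a + c + reverse (involute (a + c)) =
        (a + reverse (involute a)) + (c + reverse (involute c)) := by
      rw [map_add, map_add]; abel
    rw [this]; exact Z.add_mem ha hc
  | smul r a _ ha =>
    have : r • a + reverse (involute (r • a)) = r • (a + reverse (involute a)) := by
      rw [map_smul, map_smul, smul_add]
    rw [this]; exact Z.smul_mem r ha

end DetAux3

open DetAux3 in
/-- In dimension 3 (char K ≠ 2), the nested product
`x * conj (x * involute (x * conj x))` with `conj y = reverse (involute y)`
is a scalar: the paper's first nested three-dimensional determinant formula
`Det(A) = A ⟦A ⟦A ⟦A⟧₁₂⟧₃⟧₁₂`. -/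
theorem det_dim_three_nested_first (K V : Type*) [Field K] [AddCommGroup V]
    [Module K V] [FiniteDimensional K V] (h2 : (2 : K) ≠ 0)
    (hdim : Module.finrank K V = 3)
    (Q : QuadraticForm K V) (x : CliffordAlgebra Q) :
    x * reverse (involute (x * involute (x * reverse (involute x)))) ∈
      Set.range (algebraMap K (CliffordAlgebra Q)) := by
  haveI : Invertible (2 : K) := invertibleOfNonzero h2
  obtain ⟨v, hv⟩ := LinearMap.BilinForm.exists_orthogonal_basis
    (QuadraticForm.associated_isSymm K Q)
  set bb : Module.Basis (Fin 3) K V := v.reindex (finCongr hdim) with hbb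
  have hb : ∀ i j : Fin 3, i ≠ j → Q.IsOrtho (bb i) (bb j) := by
    intro i j hij
    rw [hbb, Module.Basis.reindex_apply, Module.Basis.reindex_apply]
    exact QuadraticMap.associated_isOrtho.mp
      (hv fun h => hij ((finCongr hdim).symm.injective h))
  set ω := ι Q (bb 0) * (ι Q (bb 1) * ι Q (bb 2)) with hωdef
  set y := x * reverse (involute x) with hy
  -- conj y = y
  have hyc : reverse (involute y) = y := by
    simp only [hy, map_mul, reverse.map_mul, reverse_involute, reverse_reverse,
      involute_involute]
  have hZ := conj_add_mem bb hb y
  rw [hyc, ← two_smul K] at hZ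
  have hyZ : y ∈ Submodule.span K {(1 : CliffordAlgebra Q), ω} := by
    have := Submodule.smul_mem _ (2 : K)⁻¹ hZ
    rwa [smul_smul, inv_mul_cancel₀ h2, one_smul] at this
  obtain ⟨a, c, hac⟩ := Submodule.mem_span_pair.mp hyZ
  refine ⟨a * a - c * (c * -(Q (bb 0) * (Q (bb 1) * Q (bb 2)))), ?_⟩
  have step1 : reverse (involute (x * involute y)) =
      reverse y * reverse (involute x) := by
    rw [map_mul, involute_involute, reverse.map_mul]
  have hrevy : reverse y = a • (1 : CliffordAlgebra Q) - c • ω := by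
    rw [← hac, map_add, map_smul, map_smul, reverse.map_one, reverse_omega hb,
      smul_neg, sub_eq_add_neg]
  rw [step1, hrevy, sub_mul, smul_mul_assoc, one_mul, smul_mul_assoc,
    omega_comm bb hb, mul_sub, mul_smul_comm, mul_smul_comm]
  have key : x * (reverse (involute x) * (ι Q (bb 0) * (ι Q (bb 1) * ι Q (bb 2)))) = y * ω := by
    rw [hy, hωdef, mul_assoc]
  rw [key, ← hy, ← hac, add_mul, smul_mul_assoc, one_mul, smul_mul_assoc, hωdef, omega_sq hb]
  simp only [smul_add, smul_smul, smul_sub, Algebra.algebraMap_eq_smul_one, map_sub, map_mul,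
    map_neg, smul_neg, smul_mul_assoc, mul_smul_comm, mul_one, one_mul]
  module
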